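/- (Compactness) Let L be a bounded lattice, X = D♭(L), and let e : L → C(X) = MPE(X,2) be the embedding a ↦ e_a. If A, B ⊆ L are such that ⋀{e_a : a ∈ A} ≤ ⋁{e_b : b ∈ B} in C(X), then there exist finite subsets A' ⊆ A and B' ⊆ B such that ⋀{e_a : a ∈ A'} ≤ ⋁{e_b : b ∈ B'}; that is, the completion (e, C(X)) of L is compact. -/

import Mathlib

namespace CanExt

open Classical

/-- A partial map from `X` into the two-element chain `{0,1}` (encoded as `Bool`,
with `false` playing the role of `0` and `true` the role of `1`);
`φ x = none` means `x` is outside the domain of `φ`. -/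
abbrev PMap (X : Type*) := X → Option Bool

/-- The preimage of `1` of a partial map. -/
def pre1 {X : Type*} (φ : PMap X) : Set X := {x | φ x = some true}

/-- The preimage of `0` of a partial map. -/
def pre0 {X : Type*} (φ : PMap X) : Set X := {x | φ x = some false}

/-- A partial map is `E`-preserving if whenever `x, y` lie in its domain and
`(x,y) ∈ E`, then `φ x ≤ φ y`. -/
def EPres {X : Type*} (E : X → X → Prop) (φ : PMap X) : Prop :=
  ∀ ⦃x y : X⦄, E x y → ∀ ⦃a b : Bool⦄, φ x = some a → φ y = some b → a ≤ b

/-- `PExt ψ φ` : the partial map `ψ` extends the partial map `φ`. -/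
def PExt {X : Type*} (ψ φ : PMap X) : Prop :=
  ∀ ⦃x : X⦄ ⦃a : Bool⦄, φ x = some a → ψ x = some a

/-- The set of maximal partial `E`-preserving maps from `(X,E)` into the
two-element chain `2`. -/
def MPE {X : Type*} (E : X → X → Prop) : Set (PMap X) :=
  {φ | EPres E φ ∧ ∀ ψ : PMap X, EPres E ψ → PExt ψ φ → ψ = φ}

/-- A partial morphism from a graph with topology `(X,E,t)` to `2_τ`:
the preimages of `1` and `0` are `t`-closed (equivalently, the domain is
closed and the restriction to the domain is continuous into discrete `2`),
and the map is `E`-preserving. -/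
def PMorphT {X : Type*} (E : X → X → Prop) (t : TopologicalSpace X) (φ : PMap X) : Prop :=
  EPres E φ ∧ @IsClosed X t (pre1 φ) ∧ @IsClosed X t (pre0 φ)

/-- The set of maximal partial morphisms from `(X,E,t)` to `2_τ`. -/
def MPM {X : Type*} (E : X → X → Prop) (t : TopologicalSpace X) : Set (PMap X) :=
  {φ | PMorphT E t φ ∧ ∀ ψ : PMap X, PMorphT E t ψ → PExt ψ φ → ψ = φ}

/-- The relation `E` between partial maps on a lattice `L`:
`(f,g) ∈ E` iff `f x ≤ g x` for all `x ∈ dom f ∩ dom g`. -/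
def ErelP {L : Type*} (f g : PMap L) : Prop :=
  ∀ ⦃x : L⦄ ⦃a b : Bool⦄, f x = some a → g x = some b → a ≤ b

/-- `f ≤₁ g` iff `f⁻¹(1) ⊆ g⁻¹(1)`. -/
def le1 {L : Type*} (f g : PMap L) : Prop := pre1 f ⊆ pre1 g

/-- `f ≤₂ g` iff `f⁻¹(0) ⊆ g⁻¹(0)`. -/
def le2 {L : Type*} (f g : PMap L) : Prop := pre0 f ⊆ pre0 g

section Lat

variable (L : Type*) [Lattice L] [BoundedOrder L]

/-- A partial homomorphism from a bounded lattice `L` to the two-element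
bounded lattice `2_B`: its domain is a `{0,1}`-sublattice of `L` and the
restriction to the domain is a bounded-lattice homomorphism. -/
def PHom (f : PMap L) : Prop :=
  f ⊥ = some false ∧ f ⊤ = some true ∧
  ∀ ⦃a b : L⦄ ⦃x y : Bool⦄, f a = some x → f b = some y →
    f (a ⊓ b) = some (x ⊓ y) ∧ f (a ⊔ b) = some (x ⊔ y)

/-- The set of maximal partial homomorphisms (MPHs) from `L` to `2_B`. -/
def MPHset : Set (PMap L) := {f | PHom L f ∧ ∀ g : PMap L, PHom L g → PExt g f → g = f}

/-- The underlying set of the graph `D♭(L)`. -/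
abbrev MPHsub := {f : PMap L // f ∈ MPHset L}

/-- The relation `E` on `MPH(L, 2_B)`, giving the graph `D♭(L)`. -/
def EM (f g : MPHsub L) : Prop := ErelP f.1 g.1

/-- The evaluation map `e_a` on `MPH(L,2_B)` : `e_a(f) = f(a)` if `a ∈ dom f`. -/
def evalM (a : L) : PMap (MPHsub L) := fun f => f.1 a

/-- `V_a = {f ∈ MPH(L,2_B) : f(a) = 0}`. -/
def VaM (a : L) : Set (MPHsub L) := {f | f.1 a = some false}

/-- `W_a = {f ∈ MPH(L,2_B) : f(a) = 1}`. -/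
def WaM (a : L) : Set (MPHsub L) := {f | f.1 a = some true}

/-- The topology on `MPH(L,2_B)` with the sets `V_a`, `W_a` as a subbasis of
closed sets. -/
def tauM : TopologicalSpace (MPHsub L) :=
  TopologicalSpace.generateFrom {U | ∃ a : L, U = (VaM L a)ᶜ ∨ U = (WaM L a)ᶜ}

/-- A (nonempty) lattice filter. -/
def IsLatFilter (F : Set L) : Prop :=
  F.Nonempty ∧ (∀ ⦃a b : L⦄, a ∈ F → a ≤ b → b ∈ F) ∧
    (∀ ⦃a b : L⦄, a ∈ F → b ∈ F → a ⊓ b ∈ F)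

/-- A (nonempty) lattice ideal. -/
def IsLatIdeal (I : Set L) : Prop :=
  I.Nonempty ∧ (∀ ⦃a b : L⦄, a ∈ I → b ≤ a → b ∈ I) ∧
    (∀ ⦃a b : L⦄, a ∈ I → b ∈ I → a ⊔ b ∈ I)

/-- The set of special partial homomorphisms (SPHs) from `L` to `2_B`:
`f⁻¹(1)` is a nonempty filter, `f⁻¹(0)` is a nonempty ideal, and they are
disjoint. -/
def SPHset : Set (PMap L) :=
  {f | IsLatFilter L (pre1 f) ∧ IsLatIdeal L (pre0 f) ∧ Disjoint (pre1 f) (pre0 f)}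

/-- The underlying set of the graph `D̄♭(L)`. -/
abbrev SPHsub := {f : PMap L // f ∈ SPHset L}

/-- The relation `E` on `SPH(L, 2_B)`, giving the graph `D̄♭(L)`. -/
def ES (f g : SPHsub L) : Prop := ErelP f.1 g.1

/-- The evaluation map `ē_a` on `SPH(L,2_B)`. -/
def evalS (a : L) : PMap (SPHsub L) := fun f => f.1 a

/-- `V_a = {f ∈ SPH(L,2_B) : f(a) = 0}`. -/
def VaS (a : L) : Set (SPHsub L) := {f | f.1 a = some false}

/-- `W_a = {f ∈ SPH(L,2_B) : f(a) = 1}`. -/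
def WaS (a : L) : Set (SPHsub L) := {f | f.1 a = some true}

/-- The topology on `SPH(L,2_B)` with the sets `V_a`, `W_a` as a subbasis of
closed sets. -/
def tauS : TopologicalSpace (SPHsub L) :=
  TopologicalSpace.generateFrom {U | ∃ a : L, U = (VaS L a)ᶜ ∨ U = (WaS L a)ᶜ}

/-- The carrier of the completion built from `D♭(L)`. -/
abbrev CX := {φ : PMap (MPHsub L) // φ ∈ MPE (EM L)}

/-- The carrier of the completion built from `D̄♭(L)`. -/
abbrev CY := {φ : PMap (SPHsub L) // φ ∈ MPE (ES L)}

end Lat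
set_option linter.unusedSectionVars false

section Aux

variable {L : Type*} [Lattice L] [BoundedOrder L]

/-! ### The partial map associated to a disjoint filter-ideal pair -/

/-- The partial map sending `F` to `1` and `I` to `0`. -/
noncomputable def pairMap (F I : Set L) : PMap L := fun x =>
  if x ∈ F then some true else if x ∈ I then some false else none

lemma pairMap_true {F I : Set L} {x : L} (hx : x ∈ F) : pairMap F I x = some true :=
  if_pos hx

lemma pairMap_false {F I : Set L} {x : L} (hx1 : x ∉ F) (hx : x ∈ I) :
    pairMap F I x = some false := by
  simp only [pairMap, if_neg hx1, if_pos hx]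

lemma pairMap_inv {F I : Set L} {x : L} {b : Bool} (h : pairMap F I x = some b) :
    (b = true ∧ x ∈ F) ∨ (b = false ∧ x ∈ I ∧ x ∉ F) := by
  by_cases h1 : x ∈ F
  · rw [pairMap_true h1] at h; injection h with h; exact Or.inl ⟨h.symm, h1⟩
  · by_cases h2 : x ∈ I
    · rw [pairMap_false h1 h2] at h; injection h with h; exact Or.inr ⟨h.symm, h2, h1⟩
    · simp only [pairMap, if_neg h1, if_neg h2] at h
      exact nomatch h

lemma pairMap_phom {F I : Set L} (hF : IsLatFilter L F) (hI : IsLatIdeal L I)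
    (hdis : ∀ ⦃x : L⦄, x ∈ F → x ∈ I → False) : PHom L (pairMap F I) := by
  obtain ⟨⟨wF, hwF⟩, hFup, hFinf⟩ := hF
  obtain ⟨⟨wI, hwI⟩, hIdn, hIsup⟩ := hI
  have htop : (⊤ : L) ∈ F := hFup hwF le_top
  have hbot : (⊥ : L) ∈ I := hIdn hwI bot_le
  have hbotF : (⊥ : L) ∉ F := fun h => hdis h hbot
  refine ⟨pairMap_false hbotF hbot, pairMap_true htop, ?_⟩
  intro a b x y hax hby
  rcases pairMap_inv hax with ⟨rfl, ha⟩ | ⟨rfl, ha, haF⟩ <;>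
    rcases pairMap_inv hby with ⟨rfl, hb⟩ | ⟨rfl, hb, hbF⟩
  · exact ⟨pairMap_true (hFinf ha hb), pairMap_true (hFup ha le_sup_left)⟩
  · refine ⟨?_, ?_⟩
    · show pairMap F I (a ⊓ b) = some false
      exact pairMap_false (fun h => hbF (hFup h inf_le_right)) (hIdn hb inf_le_right)
    · show pairMap F I (a ⊔ b) = some true
      exact pairMap_true (hFup ha le_sup_left)
  · refine ⟨?_, ?_⟩
    · show pairMap F I (a ⊓ b) = some false
      exact pairMap_false (fun h => haF (hFup h inf_le_left)) (hIdn ha inf_le_left)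
    · show pairMap F I (a ⊔ b) = some true
      exact pairMap_true (hFup hb le_sup_right)
  · refine ⟨?_, ?_⟩
    · show pairMap F I (a ⊓ b) = some false
      exact pairMap_false (fun h => haF (hFup h inf_le_left)) (hIdn ha inf_le_left)
    · show pairMap F I (a ⊔ b) = some false
      exact pairMap_false (fun h => hdis h (hIsup ha hb)) (hIsup ha hb)

/-! ### Zorn: every partial homomorphism extends to a maximal one -/

/-- The graph of a partial map. -/
def graphOf (f : PMap L) : Set (L × Bool) := {p | f p.1 = some p.2}

/-- Recover a partial map from a (functional) set of pairs. -/
noncomputable def ofGraph (U : Set (L × Bool)) : PMap L := fun x =>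
  if (x, true) ∈ U then some true else if (x, false) ∈ U then some false else none

lemma ofGraph_some {U : Set (L × Bool)}
    (hfun : ∀ ⦃x : L⦄ ⦃b b' : Bool⦄, (x, b) ∈ U → (x, b') ∈ U → b = b') {x : L} {b : Bool} :
    ofGraph U x = some b ↔ (x, b) ∈ U := by
  constructor
  · intro h
    by_cases h1 : (x, true) ∈ U
    · simp only [ofGraph, if_pos h1] at h
      injection h with h; subst h; exact h1
    · by_cases h2 : (x, false) ∈ U
      · simp only [ofGraph, if_neg h1, if_pos h2] at h
        injection h with h; subst h; exact h2
      · simp only [ofGraph, if_neg h1, if_neg h2] at h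
        exact nomatch h
  · intro h
    match b with
    | true => simp only [ofGraph, if_pos h]
    | false =>
      have hne : (x, true) ∉ U := fun h1 => Bool.noConfusion (hfun h1 h)
      simp only [ofGraph, if_neg hne, if_pos h]

lemma exists_mph {f : PMap L} (hf : PHom L f) : ∃ g, g ∈ MPHset L ∧ PExt g f := by
  classical
  set S : Set (Set (L × Bool)) :=
    {G | ∃ g : PMap L, (PHom L g ∧ PExt g f) ∧ G = graphOf g} with hS
  have hchain : ∀ c ⊆ S, IsChain (· ⊆ ·) c → c.Nonempty → ∃ ub ∈ S, ∀ s ∈ c, s ⊆ ub := by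
    intro c hcS hch hcne
    set U := ⋃₀ c with hU
    have hfun : ∀ ⦃x : L⦄ ⦃b b' : Bool⦄, (x, b) ∈ U → (x, b') ∈ U → b = b' := by
      intro x b b' hb hb'
      obtain ⟨G1, hG1, hmb⟩ := hb
      obtain ⟨G2, hG2, hmb'⟩ := hb'
      obtain ⟨g1, hg1, rfl⟩ := hcS hG1
      obtain ⟨g2, hg2, rfl⟩ := hcS hG2
      rcases hch.total hG1 hG2 with h | h
      · have h1 : g2 x = some b := h hmb
        have h2 : g2 x = some b' := hmb'
        rw [h1] at h2; injection h2
      · have h1 : g1 x = some b := hmb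
        have h2 : g1 x = some b' := h hmb'
        rw [h1] at h2; injection h2
    obtain ⟨G0, hG0⟩ := hcne
    obtain ⟨g0, ⟨hg0p, hg0e⟩, hG0eq⟩ := hcS hG0
    have hsubU : ∀ {x : L} {b : Bool}, g0 x = some b → (x, b) ∈ U := by
      intro x b h
      exact ⟨G0, hG0, by rw [hG0eq]; exact h⟩
    have key : ∀ {a b : L} {x y : Bool}, (a, x) ∈ U → (b, y) ∈ U →
        ((a ⊓ b, x ⊓ y) ∈ U ∧ (a ⊔ b, x ⊔ y) ∈ U) := by
      intro a b x y ha hb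
      obtain ⟨G1, hG1, hma⟩ := ha
      obtain ⟨G2, hG2, hmb⟩ := hb
      obtain ⟨g1, ⟨hg1p, _⟩, rfl⟩ := hcS hG1
      obtain ⟨g2, ⟨hg2p, _⟩, rfl⟩ := hcS hG2
      rcases hch.total hG1 hG2 with h | h
      · have ha' : g2 a = some x := h hma
        have hb' : g2 b = some y := hmb
        obtain ⟨h1, h2⟩ := hg2p.2.2 ha' hb'
        exact ⟨⟨_, hG2, h1⟩, ⟨_, hG2, h2⟩⟩
      · have ha' : g1 a = some x := hma
        have hb' : g1 b = some y := h hmb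
        obtain ⟨h1, h2⟩ := hg1p.2.2 ha' hb'
        exact ⟨⟨_, hG1, h1⟩, ⟨_, hG1, h2⟩⟩
    set g := ofGraph U with hg
    have memU : ∀ {x : L} {b : Bool}, g x = some b ↔ (x, b) ∈ U := fun {x b} =>
      ofGraph_some hfun
    have hgp : PHom L g := by
      refine ⟨memU.2 (hsubU hg0p.1), memU.2 (hsubU hg0p.2.1), ?_⟩
      intro a b x y hax hby
      obtain ⟨h1, h2⟩ := key (memU.1 hax) (memU.1 hby)
      exact ⟨memU.2 h1, memU.2 h2⟩
    have hge : PExt g f := fun x a hfx => memU.2 (hsubU (hg0e hfx))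
    refine ⟨U, ⟨g, ⟨hgp, hge⟩, ?_⟩, fun s hs => Set.subset_sUnion_of_mem hs⟩
    ext ⟨x, b⟩
    exact (memU (x := x) (b := b)).symm
  obtain ⟨m, hsubm, hmax⟩ := zorn_subset_nonempty S hchain (graphOf f)
    ⟨f, ⟨hf, fun _ _ h => h⟩, rfl⟩
  obtain ⟨g, ⟨hgp, hge⟩, rfl⟩ := hmax.1
  refine ⟨g, ⟨hgp, ?_⟩, hge⟩
  intro h hph hext
  have hmem : graphOf h ∈ S := ⟨h, ⟨hph, fun x a hfx => hext (hge hfx)⟩, rfl⟩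
  have hsub2 : graphOf g ⊆ graphOf h := fun p hp => hext hp
  have hle : graphOf h ⊆ graphOf g := hmax.2 hmem hsub2
  funext x
  cases hx : h x with
  | none =>
    cases hgx : g x with
    | none => rfl
    | some b =>
      have := hext hgx
      rw [hx] at this; cases this
  | some b =>
    have hgb : g x = some b :=
      hle (show (x, b) ∈ graphOf h from hx)
    exact hgb.symm

end Aux
/-! ### Structural facts about maximal partial homomorphisms -/

section Aux2

variable {L : Type*} [Lattice L] [BoundedOrder L]

lemma mph_not_le {g : PMap L} (hg : PHom L g) {u v : L}
    (hu : g u = some true) (hv : g v = some false) : ¬ u ≤ v := by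
  intro hle
  have h1 : g (u ⊔ v) = some (true ⊔ false) := (hg.2.2 hu hv).2
  rw [sup_eq_right.mpr hle] at h1
  rw [hv] at h1
  injection h1 with h1
  exact Bool.noConfusion h1

/-- upward closure of `pre1` and downward closure of `pre0`:
a maximal partial hom maps everything above a `1` to `1`, below a `0` to `0`. -/
lemma mph_up_dn {g : PMap L} (hg : g ∈ MPHset L) :
    (∀ ⦃u x : L⦄, g u = some true → u ≤ x → g x = some true) ∧
    (∀ ⦃v x : L⦄, g v = some false → x ≤ v → g x = some false) := by
  obtain ⟨hph, hmax⟩ := hg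
  set F : Set L := {x | ∃ u, g u = some true ∧ u ≤ x} with hF
  set I : Set L := {x | ∃ v, g v = some false ∧ x ≤ v} with hI
  have hFf : IsLatFilter L F := by
    refine ⟨⟨⊤, ⊤, hph.2.1, le_rfl⟩, ?_, ?_⟩
    · rintro a b ⟨u, hu, hua⟩ hab; exact ⟨u, hu, hua.trans hab⟩
    · rintro a b ⟨u, hu, hua⟩ ⟨w, hw, hwb⟩
      exact ⟨u ⊓ w, by simpa using (hph.2.2 hu hw).1, inf_le_inf hua hwb⟩
  have hIi : IsLatIdeal L I := by
    refine ⟨⟨⊥, ⊥, hph.1, le_rfl⟩, ?_, ?_⟩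
    · rintro a b ⟨v, hv, hav⟩ hba; exact ⟨v, hv, hba.trans hav⟩
    · rintro a b ⟨v, hv, hav⟩ ⟨w, hw, hbw⟩
      exact ⟨v ⊔ w, by simpa using (hph.2.2 hv hw).2, sup_le_sup hav hbw⟩
  have hdis : ∀ ⦃x : L⦄, x ∈ F → x ∈ I → False := by
    rintro x ⟨u, hu, hux⟩ ⟨v, hv, hxv⟩
    exact mph_not_le hph hu hv (hux.trans hxv)
  have hext : PExt (pairMap F I) g := by
    intro x a hx
    match a with
    | true => exact pairMap_true ⟨x, hx, le_rfl⟩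
    | false =>
      refine pairMap_false ?_ ⟨x, hx, le_rfl⟩
      rintro ⟨u, hu, hux⟩
      exact mph_not_le hph hu hx hux
  have heq : pairMap F I = g := hmax _ (pairMap_phom hFf hIi hdis) hext
  constructor
  · intro u x hu hux
    rw [← heq]
    exact pairMap_true ⟨u, hu, hux⟩
  · intro v x hv hxv
    rw [← heq]
    refine pairMap_false ?_ ⟨v, hv, hxv⟩
    rintro ⟨u, hu, hux⟩
    exact mph_not_le hph hu hv (hux.trans hxv)

/-- First obstruction: if `a` is outside the domain of a maximal partial hom `g`,
then `u ⊓ a ≤ v` for some `u ∈ g⁻¹(1)`, `v ∈ g⁻¹(0)`. -/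
lemma mph_obstruction₁ {g : PMap L} (hg : g ∈ MPHset L) {a : L} (ha : g a = none) :
    ∃ u v, g u = some true ∧ g v = some false ∧ u ⊓ a ≤ v := by
  by_contra hcon
  push_neg at hcon
  obtain ⟨hph, hmax⟩ := hg
  set F : Set L := {x | ∃ u, g u = some true ∧ u ⊓ a ≤ x} with hFd
  set I : Set L := {x | ∃ v, g v = some false ∧ x ≤ v} with hId
  have hFf : IsLatFilter L F := by
    refine ⟨⟨a, ⊤, hph.2.1, inf_le_right⟩, ?_, ?_⟩
    · rintro x y ⟨u, hu, hux⟩ hxy; exact ⟨u, hu, hux.trans hxy⟩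
    · rintro x y ⟨u, hu, hux⟩ ⟨w, hw, hwy⟩
      refine ⟨u ⊓ w, by simpa using (hph.2.2 hu hw).1, le_inf ?_ ?_⟩
      · exact le_trans (inf_le_inf_right a inf_le_left) hux
      · exact le_trans (inf_le_inf_right a inf_le_right) hwy
  have hIi : IsLatIdeal L I := by
    refine ⟨⟨⊥, ⊥, hph.1, le_rfl⟩, ?_, ?_⟩
    · rintro x y ⟨v, hv, hxv⟩ hyx; exact ⟨v, hv, hyx.trans hxv⟩
    · rintro x y ⟨v, hv, hxv⟩ ⟨w, hw, hyw⟩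
      exact ⟨v ⊔ w, by simpa using (hph.2.2 hv hw).2, sup_le_sup hxv hyw⟩
  have hdis : ∀ ⦃x : L⦄, x ∈ F → x ∈ I → False := by
    rintro x ⟨u, hu, hux⟩ ⟨v, hv, hxv⟩
    exact hcon u v hu hv (hux.trans hxv)
  have hext : PExt (pairMap F I) g := by
    intro x b hx
    match b with
    | true => exact pairMap_true ⟨x, hx, inf_le_left⟩
    | false =>
      refine pairMap_false ?_ ⟨x, hx, le_rfl⟩
      rintro ⟨u, hu, hux⟩
      exact hcon u x hu hx hux
  have heq : pairMap F I = g := hmax _ (pairMap_phom hFf hIi hdis) hext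
  have : g a = some true := by
    rw [← heq]; exact pairMap_true ⟨⊤, hph.2.1, inf_le_right⟩
  rw [ha] at this; exact nomatch this

/-- Second obstruction: if `a` is outside the domain of a maximal partial hom `g`,
then `u ≤ a ⊔ v` for some `u ∈ g⁻¹(1)`, `v ∈ g⁻¹(0)`. -/
lemma mph_obstruction₂ {g : PMap L} (hg : g ∈ MPHset L) {a : L} (ha : g a = none) :
    ∃ u v, g u = some true ∧ g v = some false ∧ u ≤ a ⊔ v := by
  by_contra hcon
  push_neg at hcon
  obtain ⟨hph, hmax⟩ := hg
  set F : Set L := {x | ∃ u, g u = some true ∧ u ≤ x} with hFd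
  set I : Set L := {x | ∃ v, g v = some false ∧ x ≤ a ⊔ v} with hId
  have hFf : IsLatFilter L F := by
    refine ⟨⟨⊤, ⊤, hph.2.1, le_rfl⟩, ?_, ?_⟩
    · rintro x y ⟨u, hu, hux⟩ hxy; exact ⟨u, hu, hux.trans hxy⟩
    · rintro x y ⟨u, hu, hux⟩ ⟨w, hw, hwy⟩
      exact ⟨u ⊓ w, by simpa using (hph.2.2 hu hw).1, inf_le_inf hux hwy⟩
  have hIi : IsLatIdeal L I := by
    refine ⟨⟨a, ⊥, hph.1, le_sup_left⟩, ?_, ?_⟩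
    · rintro x y ⟨v, hv, hxv⟩ hyx; exact ⟨v, hv, hyx.trans hxv⟩
    · rintro x y ⟨v, hv, hxv⟩ ⟨w, hw, hyw⟩
      refine ⟨v ⊔ w, by simpa using (hph.2.2 hv hw).2, sup_le ?_ ?_⟩
      · exact hxv.trans (sup_le_sup_left le_sup_left a)
      · exact hyw.trans (sup_le_sup_left le_sup_right a)
  have hdis : ∀ ⦃x : L⦄, x ∈ F → x ∈ I → False := by
    rintro x ⟨u, hu, hux⟩ ⟨v, hv, hxv⟩
    exact hcon u v hu hv (hux.trans hxv)
  have hext : PExt (pairMap F I) g := by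
    intro x b hx
    match b with
    | true => exact pairMap_true ⟨x, hx, le_rfl⟩
    | false =>
      refine pairMap_false ?_ ⟨x, hx, le_sup_right⟩
      rintro ⟨u, hu, hux⟩
      exact hcon u x hu hx (hux.trans le_sup_right)
  have heq : pairMap F I = g := hmax _ (pairMap_phom hFf hIi hdis) hext
  have : g a = some false := by
    rw [← heq]
    refine pairMap_false ?_ ⟨⊥, hph.1, le_sup_left⟩
    rintro ⟨u, hu, hua⟩
    exact hcon u ⊥ hu hph.1 (hua.trans le_sup_left)
  rw [ha] at this; exact nomatch this

/-- Fact B: for a maximal partial hom `g` with `g a ≠ 0` there is a maximal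
partial hom `f` with `f a = 1` lying `E`-below `g`. -/
lemma factB {g : PMap L} (hg : g ∈ MPHset L) {a : L} (ha : g a ≠ some false) :
    ∃ f, f ∈ MPHset L ∧ f a = some true ∧ ErelP f g := by
  cases hag : g a with
  | some b =>
    match b with
    | true =>
      refine ⟨g, hg, hag, ?_⟩
      intro x p q h1 h2
      rw [h1] at h2; injection h2 with h2; exact h2 ▸ le_rfl
    | false => exact absurd hag ha
  | none =>
    obtain ⟨u₀, v₀, hu₀, hv₀, hob⟩ := mph_obstruction₂ hg hag
    set F : Set L := {x | a ≤ x} with hFd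
    set I : Set L := {x | ∃ v, g v = some false ∧ x ≤ v} with hId
    have hFf : IsLatFilter L F := by
      refine ⟨⟨a, le_rfl⟩, ?_, ?_⟩
      · intro x y hx hxy; exact hx.trans hxy
      · intro x y hx hy; exact le_inf hx hy
    have hIi : IsLatIdeal L I := by
      refine ⟨⟨⊥, ⊥, hg.1.1, le_rfl⟩, ?_, ?_⟩
      · rintro x y ⟨v, hv, hxv⟩ hyx; exact ⟨v, hv, hyx.trans hxv⟩
      · rintro x y ⟨v, hv, hxv⟩ ⟨w, hw, hyw⟩
        exact ⟨v ⊔ w, by simpa using (hg.1.2.2 hv hw).2, sup_le_sup hxv hyw⟩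
    have hdis : ∀ ⦃x : L⦄, x ∈ F → x ∈ I → False := by
      rintro x hax ⟨v, hv, hxv⟩
      have hav : a ≤ v := le_trans hax hxv
      have h1 : g (v ⊔ v₀) = some false := by simpa using (hg.1.2.2 hv hv₀).2
      exact mph_not_le hg.1 hu₀ h1
        (hob.trans (sup_le_sup_right hav v₀))
    obtain ⟨f, hfm, hfe⟩ := exists_mph (pairMap_phom hFf hIi hdis)
    refine ⟨f, hfm, hfe (pairMap_true le_rfl), ?_⟩
    intro x p q h1 h2
    match q with
    | true => exact Bool.le_true p
    | false =>
      have hxI : x ∈ I := ⟨x, h2, le_rfl⟩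
      have hxF : x ∉ F := fun h => hdis h hxI
      have := hfe (pairMap_false hxF hxI)
      rw [h1] at this; injection this with this; exact this ▸ le_rfl
  
/-- Fact A: for a maximal partial hom `g` with `g a ≠ 1` there is a maximal
partial hom `h` with `h a = 0` lying `E`-above `g`. -/
lemma factA {g : PMap L} (hg : g ∈ MPHset L) {a : L} (ha : g a ≠ some true) :
    ∃ h, h ∈ MPHset L ∧ h a = some false ∧ ErelP g h := by
  cases hag : g a with
  | some b =>
    match b with
    | false =>
      refine ⟨g, hg, hag, ?_⟩
      intro x p q h1 h2
      rw [h1] at h2; injection h2 with h2; exact h2 ▸ le_rfl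
    | true => exact absurd hag ha
  | none =>
    obtain ⟨u₀, v₀, hu₀, hv₀, hob⟩ := mph_obstruction₁ hg hag
    set F : Set L := {x | ∃ u, g u = some true ∧ u ≤ x} with hFd
    set I : Set L := {x | x ≤ a} with hId
    have hFf : IsLatFilter L F := by
      refine ⟨⟨⊤, ⊤, hg.1.2.1, le_rfl⟩, ?_, ?_⟩
      · rintro x y ⟨u, hu, hux⟩ hxy; exact ⟨u, hu, hux.trans hxy⟩
      · rintro x y ⟨u, hu, hux⟩ ⟨w, hw, hwy⟩
        exact ⟨u ⊓ w, by simpa using (hg.1.2.2 hu hw).1, inf_le_inf hux hwy⟩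
    have hIi : IsLatIdeal L I := by
      refine ⟨⟨a, le_rfl⟩, ?_, ?_⟩
      · intro x y hx hyx; exact hyx.trans hx
      · intro x y hx hy; exact sup_le hx hy
    have hdis : ∀ ⦃x : L⦄, x ∈ F → x ∈ I → False := by
      rintro x ⟨u, hu, hux⟩ hxa
      have h1 : g (u₀ ⊓ u) = some true := by simpa using (hg.1.2.2 hu₀ hu).1
      refine mph_not_le hg.1 h1 hv₀ ?_
      exact le_trans (inf_le_inf_left u₀ (hux.trans hxa)) hob
    obtain ⟨h, hhm, hhe⟩ := exists_mph (pairMap_phom hFf hIi hdis)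
    have haF : a ∉ F := fun hmem => hdis hmem le_rfl
    refine ⟨h, hhm, hhe (pairMap_false haF le_rfl), ?_⟩
    intro x p q h1 h2
    match p with
    | false => exact Bool.false_le q
    | true =>
      have hxF : x ∈ F := ⟨x, h1, le_rfl⟩
      have := hhe (pairMap_true hxF)
      rw [h2] at this; injection this with this; exact this ▸ le_rfl

/-- Finite infima of elements mapped to `1` are mapped to `1`. -/
lemma mph_finset_inf {g : PMap L} (hg : PHom L g) (s : Finset L)
    (h : ∀ a ∈ s, g a = some true) : g (s.inf id) = some true := by
  classical
  induction s using Finset.induction_on with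
  | empty => simpa using hg.2.1
  | insert _ _ hnotmem ih =>
    rename_i a s
    rw [Finset.inf_insert]
    have h1 : g a = some true := h a (Finset.mem_insert_self a s)
    have h2 : g (s.inf id) = some true := ih fun b hb => h b (Finset.mem_insert_of_mem hb)
    simpa using (hg.2.2 h1 h2).1

/-- Finite suprema of elements mapped to `0` are mapped to `0`. -/
lemma mph_finset_sup {g : PMap L} (hg : PHom L g) (s : Finset L)
    (h : ∀ a ∈ s, g a = some false) : g (s.sup id) = some false := by
  classical
  induction s using Finset.induction_on with
  | empty => simpa using hg.1
  | insert _ _ hnotmem ih =>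
    rename_i a s
    rw [Finset.sup_insert]
    have h1 : g a = some false := h a (Finset.mem_insert_self a s)
    have h2 : g (s.sup id) = some false := ih fun b hb => h b (Finset.mem_insert_of_mem hb)
    simpa using (hg.2.2 h1 h2).2

end Aux2
/-! ### The completion `C(X)` for `X = D♭(L)` -/

section Aux3

variable {L : Type*} [Lattice L] [BoundedOrder L]

lemma bool_tf (h : (true : Bool) ≤ false) : False := absurd h (by decide)

lemma em_refl (x : MPHsub L) : EM L x x := by
  intro a p q h1 h2
  rw [h1] at h2; injection h2 with h2; exact h2 ▸ le_rfl

/-- The evaluation maps are maximal partial `E`-preserving maps. -/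
lemma evalM_mem (a : L) : evalM L a ∈ MPE (EM L) := by
  constructor
  · intro f g hE p q hf hg
    exact hE hf hg
  · intro ψ hψ hext
    funext g
    cases hc : ψ g with
    | none =>
      cases hga : g.1 a with
      | none => exact hga.symm
      | some b =>
        have : ψ g = some b := hext (show evalM L a g = some b from hga)
        rw [hc] at this; exact nomatch this
    | some b =>
      match b with
      | true =>
        by_cases hga : g.1 a = some true
        · exact hga.symm
        · exfalso
          obtain ⟨h, hhm, hha, hgh⟩ := factA g.2 hga
          have h1 : ψ ⟨h, hhm⟩ = some false :=
            hext (show evalM L a ⟨h, hhm⟩ = some false from hha)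
          exact bool_tf (hψ (show EM L g ⟨h, hhm⟩ from hgh) hc h1)
      | false =>
        by_cases hga : g.1 a = some false
        · exact hga.symm
        · exfalso
          obtain ⟨f, hfm, hfa, hfg⟩ := factB g.2 hga
          have h1 : ψ ⟨f, hfm⟩ = some true :=
            hext (show evalM L a ⟨f, hfm⟩ = some true from hfa)
          exact bool_tf (hψ (show EM L ⟨f, hfm⟩ g from hfg) h1 hc)

/-- Lower polar of a set of vertices. -/
def dnn (U : Set (MPHsub L)) : Set (MPHsub L) := {y | ∀ x ∈ U, ¬ EM L x y}

/-- Upper polar of a set of vertices. -/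
def upp (V : Set (MPHsub L)) : Set (MPHsub L) := {x | ∀ y ∈ V, ¬ EM L x y}

lemma subset_upp_dnn (U : Set (MPHsub L)) : U ⊆ upp (dnn U) :=
  fun u hu y hy => hy u hu

lemma upp_dnn_mono {U V : Set (MPHsub L)} (h : U ⊆ V) : upp (dnn U) ⊆ upp (dnn V) :=
  fun x hx y hy => hx y (fun u hu => hy u (h hu))

lemma not_mem_upp_dnn {U : Set (MPHsub L)} {x : MPHsub L}
    (h1 : x ∈ upp (dnn U)) (h2 : x ∈ dnn U) : False :=
  h1 x h2 (em_refl x)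

/-- The canonical maximal partial `E`-preserving map determined by a set `U`. -/
noncomputable def mkp (U : Set (MPHsub L)) : PMap (MPHsub L) := fun x =>
  if x ∈ upp (dnn U) then some true else if x ∈ dnn U then some false else none

lemma mkp_true {U : Set (MPHsub L)} {x : MPHsub L} (h : x ∈ upp (dnn U)) :
    mkp U x = some true := if_pos h

lemma mkp_false {U : Set (MPHsub L)} {x : MPHsub L} (h : x ∈ dnn U) :
    mkp U x = some false := by
  rw [mkp, if_neg fun h' => not_mem_upp_dnn h' h, if_pos h]

lemma mkp_inv {U : Set (MPHsub L)} {x : MPHsub L} {b : Bool} (h : mkp U x = some b) :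
    (b = true ∧ x ∈ upp (dnn U)) ∨ (b = false ∧ x ∈ dnn U) := by
  by_cases h1 : x ∈ upp (dnn U)
  · rw [mkp_true h1] at h; injection h with h; exact Or.inl ⟨h.symm, h1⟩
  · by_cases h2 : x ∈ dnn U
    · rw [mkp_false h2] at h; injection h with h; exact Or.inr ⟨h.symm, h2⟩
    · rw [mkp, if_neg h1, if_neg h2] at h; exact nomatch h

lemma pre1_mkp (U : Set (MPHsub L)) : pre1 (mkp U) = upp (dnn U) := by
  ext x
  constructor
  · intro h
    rcases mkp_inv h with ⟨_, h⟩ | ⟨h, _⟩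
    · exact h
    · exact Bool.noConfusion h
  · exact mkp_true

lemma mkp_mem (U : Set (MPHsub L)) : mkp U ∈ MPE (EM L) := by
  constructor
  · intro x y hE p q h1 h2
    rcases mkp_inv h1 with ⟨rfl, hx⟩ | ⟨rfl, _⟩
    · rcases mkp_inv h2 with ⟨rfl, _⟩ | ⟨rfl, hy⟩
      · exact le_rfl
      · exact absurd hE (hx y hy)
    · exact Bool.false_le q
  · intro ψ hψ hext
    funext x
    cases hc : ψ x with
    | none =>
      cases hm : mkp U x with
      | none => rfl
      | some b =>
        have := hext hm
        rw [hc] at this; exact nomatch this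
    | some b =>
      match b with
      | true =>
        have hx : x ∈ upp (dnn U) := by
          intro y hy hExy
          have h1 : ψ y = some false := hext (mkp_false hy)
          exact bool_tf (hψ hExy hc h1)
        exact (mkp_true hx).symm
      | false =>
        have hx : x ∈ dnn U := by
          intro u hu hEux
          have h1 : ψ u = some true := hext (mkp_true (subset_upp_dnn U hu))
          exact bool_tf (hψ hEux h1 hc)
        exact (mkp_false hx).symm

/-- `pre0` of a maximal partial `E`-preserving map is the lower polar of `pre1`. -/
lemma mpe_pre0 {φ : PMap (MPHsub L)} (hφ : φ ∈ MPE (EM L)) :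
    pre0 φ = dnn (pre1 φ) := by
  ext y
  constructor
  · intro hy u hu hE
    exact bool_tf (hφ.1 hE hu hy)
  · intro hy
    show φ y = some false
    cases h : φ y with
    | some b =>
      match b with
      | false => rfl
      | true => exact absurd (em_refl y) (hy y h)
    | none =>
      classical
      set ψ : PMap (MPHsub L) := fun x => if x = y then some false else φ x with hψd
      have hψE : EPres (EM L) ψ := by
        intro x z hE p q hx hz
        by_cases hxy : x = y
        · subst hxy
          rw [hψd] at hx; simp only [if_pos rfl] at hx
          injection hx with hx
          exact hx ▸ Bool.false_le q
        · rw [hψd] at hx; simp only [if_neg hxy] at hx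
          by_cases hzy : z = y
          · subst hzy
            match p with
            | false => exact Bool.false_le q
            | true => exact absurd hE (hy x hx)
          · rw [hψd] at hz; simp only [if_neg hzy] at hz
            exact hφ.1 hE hx hz
      have hψext : PExt ψ φ := by
        intro x b hx
        have hxy : x ≠ y := fun he => by rw [he, h] at hx; exact nomatch hx
        rw [hψd]; simp only [if_neg hxy]; exact hx
      have heq := hφ.2 ψ hψE hψext
      have hψy : ψ y = some false := by rw [hψd]; simp
      rw [heq, h] at hψy
      exact hψy

/-- `pre1` of a maximal partial `E`-preserving map is Galois closed. -/
lemma mpe_pre1 {φ : PMap (MPHsub L)} (hφ : φ ∈ MPE (EM L)) :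
    pre1 φ = upp (dnn (pre1 φ)) := by
  refine Set.Subset.antisymm (subset_upp_dnn _) ?_
  intro x hx
  show φ x = some true
  cases h : φ x with
  | some b =>
    match b with
    | true => rfl
    | false =>
      have : x ∈ dnn (pre1 φ) := by rw [← mpe_pre0 hφ]; exact h
      exact absurd (em_refl x) (hx x this)
  | none =>
    classical
    set ψ : PMap (MPHsub L) := fun z => if z = x then some true else φ z with hψd
    have hψE : EPres (EM L) ψ := by
      intro w z hE p q hw hz
      by_cases hzx : z = x
      · subst hzx
        rw [hψd] at hz; simp only [if_pos rfl] at hz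
        injection hz with hz
        exact hz ▸ Bool.le_true p
      · rw [hψd] at hz; simp only [if_neg hzx] at hz
        by_cases hwx : w = x
        · subst hwx
          match q with
          | true => exact Bool.le_true p
          | false =>
            have : z ∈ dnn (pre1 φ) := by rw [← mpe_pre0 hφ]; exact hz
            exact absurd hE (hx z this)
        · rw [hψd] at hw; simp only [if_neg hwx] at hw
          exact hφ.1 hE hw hz
    have hψext : PExt ψ φ := by
      intro z b hz
      have hzx : z ≠ x := fun he => by rw [he, h] at hz; exact nomatch hz
      rw [hψd]; simp only [if_neg hzx]; exact hz
    have heq := hφ.2 ψ hψE hψext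
    have hψx : ψ x = some true := by rw [hψd]; simp
    rw [heq, h] at hψx
    exact hψx

/-- Maximal partial `E`-preserving maps are determined by `pre1`. -/
lemma mpe_ext {φ ψ : PMap (MPHsub L)} (hφ : φ ∈ MPE (EM L)) (hψ : ψ ∈ MPE (EM L))
    (h : pre1 φ = pre1 ψ) : φ = ψ := by
  have h0 : pre0 φ = pre0 ψ := by rw [mpe_pre0 hφ, mpe_pre0 hψ, h]
  funext x
  cases hc : φ x with
  | some b =>
    match b with
    | true =>
      have : x ∈ pre1 ψ := h ▸ (hc : x ∈ pre1 φ)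
      exact this.symm
    | false =>
      have : x ∈ pre0 ψ := h0 ▸ (hc : x ∈ pre0 φ)
      exact this.symm
  | none =>
    cases hd : ψ x with
    | none => rfl
    | some b =>
      match b with
      | true =>
        have h2 : x ∈ pre1 φ := h.symm ▸ (hd : x ∈ pre1 ψ)
        have h3 : φ x = some true := h2
        rw [hc] at h3; exact h3
      | false =>
        have h2 : x ∈ pre0 φ := h0.symm ▸ (hd : x ∈ pre0 ψ)
        have h3 : φ x = some false := h2
        rw [hc] at h3; exact h3

end Aux3
/-! ### The complete lattice structure on `C(X)` -/

section Aux4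

variable (L : Type*) [Lattice L] [BoundedOrder L]

/-- The partial order on `C(X)`: `φ ≤ ψ` iff `φ⁻¹(1) ⊆ ψ⁻¹(1)`. -/
noncomputable def cxPO : PartialOrder (CX L) where
  le φ ψ := pre1 φ.1 ⊆ pre1 ψ.1
  le_refl φ := subset_rfl
  le_trans φ ψ χ h1 h2 := Set.Subset.trans h1 h2
  le_antisymm φ ψ h1 h2 := Subtype.ext (mpe_ext φ.2 ψ.2 (Set.Subset.antisymm h1 h2))

/-- Infima in `C(X)`. -/
noncomputable def cxInfS : InfSet (CX L) :=
  ⟨fun S => ⟨mkp (⋂ φ ∈ S, pre1 φ.1), mkp_mem _⟩⟩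

lemma pre1_cxInf (S : Set (CX L)) :
    pre1 (@sInf _ (cxInfS L) S).1 = upp (dnn (⋂ φ ∈ S, pre1 φ.1)) :=
  pre1_mkp _

lemma cxGLB (S : Set (CX L)) :
    @IsGLB (CX L) (cxPO L).toPreorder.toLE S (@sInf _ (cxInfS L) S) := by
  constructor
  · intro φ hφ
    show pre1 (@sInf _ (cxInfS L) S).1 ⊆ pre1 φ.1
    rw [pre1_cxInf]
    have h1 : (⋂ ψ ∈ S, pre1 ψ.1) ⊆ pre1 φ.1 := Set.biInter_subset_of_mem hφ
    exact (upp_dnn_mono h1).trans (mpe_pre1 φ.2).symm.subset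
  · intro ψ hψ
    show pre1 ψ.1 ⊆ pre1 (@sInf _ (cxInfS L) S).1
    rw [pre1_cxInf]
    have h1 : pre1 ψ.1 ⊆ ⋂ φ ∈ S, pre1 φ.1 :=
      Set.subset_iInter₂ fun φ hφ => hψ hφ
    exact h1.trans (subset_upp_dnn _)

/-- The complete lattice structure on `C(X)`. -/
noncomputable def cxCL : CompleteLattice (CX L) :=
  @completeLatticeOfInf (CX L) (cxPO L) (cxInfS L) (cxGLB L)

lemma cx_sInf_eq (S : Set (CX L)) :
    (cxCL L).sInf S = @sInf _ (cxInfS L) S := rfl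

lemma cx_sSup_eq (S : Set (CX L)) :
    (cxCL L).sSup S = @sInf _ (cxInfS L) (@upperBounds _ (cxPO L).toPreorder.toLE S) := rfl

lemma cx_le_iff (φ ψ : CX L) : (cxCL L).le φ ψ ↔ pre1 φ.1 ⊆ pre1 ψ.1 := Iff.rfl

end Aux4

/-- **Compactness.** Let `L` be a bounded lattice, `X = D♭(L)`,
and `e : L → C(X) = MPE(X,2)` the embedding `a ↦ e_a`. If `A, B ⊆ L` satisfy
`⋀ e(A) ≤ ⋁ e(B)` in `C(X)`, then there are finite `A' ⊆ A`, `B' ⊆ B` with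
`⋀ e(A') ≤ ⋁ e(B')`: the completion `(e, C(X))` is compact. -/
theorem stmt_10 (L : Type*) [Lattice L] [BoundedOrder L] :
    ∃ inst : CompleteLattice (CX L),
      (∀ φ ψ : CX L, inst.le φ ψ ↔ pre1 φ.1 ⊆ pre1 ψ.1) ∧
      ∃ e : L → CX L,
        (∀ a : L, (e a).1 = evalM L a) ∧
        ∀ A B : Set L,
          inst.le (inst.sInf (e '' A)) (inst.sSup (e '' B)) →
          ∃ A' B' : Finset L, ↑A' ⊆ A ∧ ↑B' ⊆ B ∧
            inst.le (inst.sInf (e '' ↑A')) (inst.sSup (e '' ↑B')) := by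
  classical
  set eL : L → CX L := fun a => ⟨evalM L a, evalM_mem a⟩ with heL
  refine ⟨cxCL L, fun φ ψ => Iff.rfl, eL, fun a => rfl, ?_⟩
  intro A B hAB
  by_cases hcase : ∃ s t : Finset L, ↑s ⊆ A ∧ ↑t ⊆ B ∧ s.inf id ≤ t.sup id
  · obtain ⟨s, t, hsA, htB, hst⟩ := hcase
    refine ⟨s, t, hsA, htB, ?_⟩
    rw [cx_le_iff]
    -- Step 1 : sInf (eL '' s) ≤ eL (s.inf id)
    have step1 : pre1 ((cxCL L).sInf (eL '' ↑s)).1 ⊆ pre1 (evalM L (s.inf id)) := by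
      rw [cx_sInf_eq, pre1_cxInf]
      have h1 : (⋂ φ ∈ eL '' (↑s : Set L), pre1 φ.1) ⊆ pre1 (evalM L (s.inf id)) := by
        intro g hg
        have hga : ∀ a ∈ s, g.1 a = some true := by
          intro a ha
          have : g ∈ pre1 (eL a).1 :=
            Set.mem_iInter₂.mp hg (eL a) ⟨a, Finset.mem_coe.mpr ha, rfl⟩
          exact this
        exact mph_finset_inf g.2.1 s hga
      exact (upp_dnn_mono h1).trans (mpe_pre1 (evalM_mem _)).symm.subset
    -- Step 2 : eL (s.inf id) ≤ eL (t.sup id)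
    have step2 : pre1 (evalM L (s.inf id)) ⊆ pre1 (evalM L (t.sup id)) := by
      intro g hg
      exact (mph_up_dn g.2).1 hg hst
    -- Step 3 : eL (t.sup id) ≤ sSup (eL '' t)
    have step3 : pre1 (evalM L (t.sup id)) ⊆ pre1 ((cxCL L).sSup (eL '' ↑t)).1 := by
      rw [cx_sSup_eq, pre1_cxInf]
      have key : pre1 (evalM L (t.sup id)) ⊆
          ⋂ ψ ∈ @upperBounds _ (cxPO L).toPreorder.toLE (eL '' (↑t : Set L)), pre1 ψ.1 := by
        refine Set.subset_iInter₂ fun ψ hψ => ?_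
        intro g hg
        rw [mpe_pre1 ψ.2]
        intro y hy hEgy
        have hyb : ∀ b ∈ t, y.1 b = some false := by
          intro b hb
          have hsub : pre1 (evalM L b) ⊆ pre1 ψ.1 :=
            hψ ⟨b, Finset.mem_coe.mpr hb, rfl⟩
          have hdn : y ∈ dnn (pre1 (evalM L b)) := fun x hx => hy x (hsub hx)
          have h0 : y ∈ pre0 (evalM L b) := by
            rw [mpe_pre0 (evalM_mem b)]; exact hdn
          exact h0
        have hq : y.1 (t.sup id) = some false := mph_finset_sup y.2.1 t hyb
        exact bool_tf (hEgy hg hq)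
      exact key.trans (subset_upp_dnn _)
    exact (step1.trans step2).trans step3
  · exfalso
    push_neg at hcase
    set F : Set L := {x | ∃ s : Finset L, ↑s ⊆ A ∧ s.inf id ≤ x} with hF
    set I : Set L := {x | ∃ t : Finset L, ↑t ⊆ B ∧ x ≤ t.sup id} with hI
    have hFf : IsLatFilter L F := by
      refine ⟨⟨⊤, ∅, by simp, by simp⟩, ?_, ?_⟩
      · rintro x y ⟨s, hs, hsx⟩ hxy; exact ⟨s, hs, hsx.trans hxy⟩
      · rintro x y ⟨s1, hs1, h1⟩ ⟨s2, hs2, h2⟩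
        refine ⟨s1 ∪ s2, ?_, ?_⟩
        · rw [Finset.coe_union]; exact Set.union_subset hs1 hs2
        · rw [Finset.inf_union]; exact inf_le_inf h1 h2
    have hIi : IsLatIdeal L I := by
      refine ⟨⟨⊥, ∅, by simp, by simp⟩, ?_, ?_⟩
      · rintro x y ⟨t, ht, htx⟩ hyx; exact ⟨t, ht, hyx.trans htx⟩
      · rintro x y ⟨t1, ht1, h1⟩ ⟨t2, ht2, h2⟩
        refine ⟨t1 ∪ t2, ?_, ?_⟩
        · rw [Finset.coe_union]; exact Set.union_subset ht1 ht2
        · rw [Finset.sup_union]; exact sup_le_sup h1 h2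
    have hdis : ∀ ⦃x : L⦄, x ∈ F → x ∈ I → False := by
      rintro x ⟨s, hs, hsx⟩ ⟨t, ht, hxt⟩
      exact hcase s t hs ht (hsx.trans hxt)
    obtain ⟨g, hgm, hge⟩ := exists_mph (pairMap_phom hFf hIi hdis)
    have hgA : ∀ a ∈ A, g a = some true := by
      intro a ha
      exact hge (pairMap_true ⟨{a}, by simpa using ha, by simp⟩)
    have hgB : ∀ b ∈ B, g b = some false := by
      intro b hb
      have hbI : b ∈ I := ⟨{b}, by simpa using hb, by simp⟩
      exact hge (pairMap_false (fun hbF => hdis hbF hbI) hbI)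
    set G : MPHsub L := ⟨g, hgm⟩ with hG
    -- G is in pre1 of the infimum
    have h1 : G ∈ pre1 ((cxCL L).sInf (eL '' A)).1 := by
      rw [cx_sInf_eq, pre1_cxInf]
      refine subset_upp_dnn _ ?_
      refine Set.mem_iInter₂.mpr ?_
      rintro φ ⟨a, ha, rfl⟩
      exact hgA a ha
    -- the canonical upper bound of eL '' B
    set ψ : CX L := ⟨mkp (⋃ b ∈ B, pre1 (evalM L b)), mkp_mem _⟩ with hψ
    have hub : ψ ∈ @upperBounds _ (cxPO L).toPreorder.toLE (eL '' B) := by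
      rintro φ ⟨b, hb, rfl⟩
      show pre1 (evalM L b) ⊆ pre1 ψ.1
      have : pre1 (evalM L b) ⊆ ⋃ b ∈ B, pre1 (evalM L b) :=
        Set.subset_biUnion_of_mem (u := fun b => pre1 (evalM L b)) hb
      rw [hψ]
      exact this.trans ((subset_upp_dnn _).trans (pre1_mkp _).symm.subset)
    have hsup_le : pre1 ((cxCL L).sSup (eL '' B)).1 ⊆ pre1 ψ.1 := by
      rw [cx_sSup_eq]
      exact (cxGLB L _).1 hub
    have hGψ : G ∈ pre1 ψ.1 := hsup_le (hAB h1)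
    have hGdn : G ∈ dnn (⋃ b ∈ B, pre1 (evalM L b)) := by
      intro x hx hExG
      obtain ⟨b, hb, hxb⟩ := Set.mem_iUnion₂.mp hx
      exact bool_tf (hExG hxb (hgB b hb))
    have hGup : G ∈ upp (dnn (⋃ b ∈ B, pre1 (evalM L b))) := by
      rw [hψ] at hGψ
      rw [← pre1_mkp]
      exact hGψ
    exact not_mem_upp_dnn hGup hGdn


end CanExt
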